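/- The rank condition is Morita invariant: if R and S are Morita equivalent rings and R satisfies the rank condition, then S satisfies the rank condition. -/

import Mathlib

universe u v

open CategoryTheory

open CategoryTheory Function

section Srj
variable (T : Type*) [Ring T]

/-- There exists a surjective linear map `A → B`. -/
def Srj (A B : Type*) [AddCommGroup A] [Module T A] [AddCommGroup B] [Module T B] : Prop :=
  ∃ f : A →ₗ[T] B, Function.Surjective f

variable {T}
variable {A B C : Type*} [AddCommGroup A] [Module T A] [AddCommGroup B] [Module T B]
  [AddCommGroup C] [Module T C]

lemma Srj.trans (h1 : Srj T A B) (h2 : Srj T B C) : Srj T A C := by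
  obtain ⟨f, hf⟩ := h1; obtain ⟨g, hg⟩ := h2
  exact ⟨g.comp f, hg.comp hf⟩

lemma Srj.of_equiv (e : A ≃ₗ[T] B) : Srj T A B := ⟨e.toLinearMap, e.surjective⟩

lemma Srj.congr {A' B' : Type*} [AddCommGroup A'] [Module T A'] [AddCommGroup B'] [Module T B']
    (h : Srj T A B) (eA : A ≃ₗ[T] A') (eB : B ≃ₗ[T] B') : Srj T A' B' :=
  ((Srj.of_equiv eA.symm).trans h).trans (Srj.of_equiv eB)

/-- Projection onto fewer coordinates is surjective. -/
lemma srj_proj (M : Type*) [AddCommGroup M] [Module T M] {N K : ℕ} (h : N ≤ K) :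
    Srj T (Fin K → M) (Fin N → M) :=
  ⟨LinearMap.funLeft T M (Fin.castLE h),
    LinearMap.funLeft_surjective_of_injective T M _ (Fin.castLE_injective h)⟩

/-- A surjection `A → B` yields a surjection `A^k → B^k`. -/
lemma srj_pow (h : Srj T A B) (k : ℕ) : Srj T (Fin k → A) (Fin k → B) := by
  obtain ⟨u, hu⟩ := h
  refine ⟨LinearMap.pi fun i => u.comp (LinearMap.proj i), fun y => ?_⟩
  choose x hx using fun i => hu (y i)
  exact ⟨x, funext fun i => hx i⟩

/-- A surjection `M^a → B` yields a surjection `M^(k*a) → B^k`. -/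
lemma srj_block {M : Type*} [AddCommGroup M] [Module T M] {a : ℕ}
    (h : Srj T (Fin a → M) B) (k : ℕ) : Srj T (Fin (k * a) → M) (Fin k → B) := by
  refine (Srj.of_equiv ?_).trans (srj_pow h k)
  exact (LinearEquiv.funCongrLeft T M finProdFinEquiv.symm).symm.trans
    (LinearEquiv.curry T M (Fin k) (Fin a))

/-- Splitting of coordinates. -/
def split_equiv (M : Type*) [AddCommGroup M] [Module T M] (p q : ℕ) :
    (Fin (p + q) → M) ≃ₗ[T] (Fin p → M) × (Fin q → M) :=
  (LinearEquiv.funCongrLeft T M finSumFinEquiv.symm).symm.trans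
    (LinearEquiv.sumArrowLequivProdArrow _ _ T M)

lemma srj_prod {A' B' : Type*} [AddCommGroup A'] [Module T A'] [AddCommGroup B'] [Module T B']
    (h : Srj T A B) (h' : Srj T A' B') : Srj T (A × A') (B × B') := by
  obtain ⟨f, hf⟩ := h; obtain ⟨g, hg⟩ := h'
  exact ⟨f.prodMap g, hf.prodMap hg⟩

/-- Iteration: a surjection `M^n → M^m` with `n < m` gives surjections onto
arbitrarily large powers. -/
lemma srj_iterate (M : Type*) [AddCommGroup M] [Module T M] {n m : ℕ}
    (h : Srj T (Fin n → M) (Fin m → M)) (hn : 0 < n) (hnm : n < m) (N : ℕ) :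
    Srj T (Fin n → M) (Fin N → M) := by
  set d := m - n with hd
  have hd1 : 1 ≤ d := by omega
  have key : ∀ t : ℕ, Srj T (Fin n → M) (Fin (n + t * d) → M) := by
    intro t
    induction t with
    | zero => exact Srj.of_equiv (LinearEquiv.funCongrLeft T M (finCongr (by omega)))
    | succ t ih =>
      -- from surjection onto `Fin (n + t*d)`, get onto `Fin (n + (t+1)*d)`
      have e1 : (Fin (n + t * d) → M) ≃ₗ[T] (Fin n → M) × (Fin (t * d) → M) :=
        split_equiv M n (t * d)
      have step : Srj T (Fin (n + t * d) → M) (Fin (n + (t + 1) * d) → M) := by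
        refine ((Srj.of_equiv e1).trans (srj_prod h (Srj.of_equiv (LinearEquiv.refl T _)))).trans
          (Srj.of_equiv ?_)
        refine (split_equiv M m (t * d)).symm.trans (LinearEquiv.funCongrLeft T M (finCongr ?_))
        rw [add_mul, one_mul]; omega
      exact ih.trans step
  exact (key N).trans (srj_proj M (by nlinarith))

end Srj

universe u₁ u₂

open CategoryTheory Limits Function

section Cat
variable {A : Type u₁} {B : Type u₂} [Ring A] [Ring B]

/-- An additive functor between module categories sends finite powers to finite powers. -/
noncomputable def mapPiIso (F : ModuleCat.{u₁} A ⥤ ModuleCat.{u₂} B) [F.Additive]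
    (M : ModuleCat.{u₁} A) (k : ℕ) :
    F.obj (ModuleCat.of A (Fin k → M)) ≅ ModuleCat.of B (Fin k → F.obj M) :=
  F.mapIso (ModuleCat.biproductIsoPi fun _ : Fin k => M).symm ≪≫
    F.mapBiproduct (fun _ : Fin k => M) ≪≫
    ModuleCat.biproductIsoPi fun _ : Fin k => F.obj M

lemma srj_map (F : ModuleCat.{u₁} A ⥤ ModuleCat.{u₂} B) [F.PreservesEpimorphisms]
    (M N : ModuleCat.{u₁} A) (h : Srj A M N) : Srj B (F.obj M) (F.obj N) := by
  obtain ⟨f, hf⟩ := h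
  have : Epi (show M ⟶ N from ModuleCat.ofHom f) := (ModuleCat.epi_iff_surjective _).2 hf
  have : Epi (F.map (show M ⟶ N from ModuleCat.ofHom f)) := inferInstance
  exact ⟨(F.map (show M ⟶ N from ModuleCat.ofHom f)).hom, (ModuleCat.epi_iff_surjective _).1 this⟩

end Cat

section Gen
variable {A : Type u₁} {B : Type u₂} [Ring A] [Ring B]

/-- If the module categories of `A` and `B` are equivalent (with additive functors), then
`B` is a quotient of a finite power of the image of `A`. -/
lemma gen_srj (e : ModuleCat.{u₁} A ≌ ModuleCat.{u₂} B) [e.functor.Additive]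
    [e.inverse.Additive] :
    ∃ c : ℕ, Srj B (Fin c → e.functor.obj (ModuleCat.of A A)) B := by
  classical
  set G := e.functor.obj (ModuleCat.of A A) with hG
  haveI : Projective (ModuleCat.of A A) :=
    (IsProjective.iff_projective A).mp inferInstance
  haveI hProj : Projective G := e.toAdjunction.map_projective _ inferInstance
  set N : Submodule B B := ⨆ f : G →ₗ[B] B, LinearMap.range f with hNdef
  have hN : N = ⊤ := by
    by_contra hne
    haveI : Nontrivial (B ⧸ N) :=
      Submodule.Quotient.nontrivial_iff.mpr hne
    set Q : ModuleCat.{u₂} B := ModuleCat.of B (B ⧸ N) with hQ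
    -- `e.inverse.obj Q` is nontrivial
    obtain ⟨y, hy⟩ : ∃ y : e.inverse.obj Q, y ≠ 0 := by
      by_contra hcon
      push_neg at hcon
      haveI : Subsingleton (e.inverse.obj Q) := ⟨fun a b => by rw [hcon a, hcon b]⟩
      have hz : Limits.IsZero (e.inverse.obj Q) := ModuleCat.isZero_of_subsingleton _
      have hz2 : Limits.IsZero Q :=
        (e.functor.map_isZero hz).of_iso (e.counitIso.symm.app Q)
      have hid : (𝟙 Q : Q ⟶ Q) = 0 := hz2.eq_of_src _ _
      obtain ⟨a, b, hab⟩ := exists_pair_ne (B ⧸ N)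
      apply hab
      have hall : ∀ x : B ⧸ N, x = 0 := by
        intro x
        have hx : (𝟙 Q : Q ⟶ Q).hom x = x := rfl
        rw [← hx, hid, ModuleCat.hom_zero, LinearMap.zero_apply]
      rw [hall a, hall b]
    -- a nonzero morphism `G ⟶ Q`
    set g₀ : ModuleCat.of A A ⟶ e.inverse.obj Q := ModuleCat.ofHom (LinearMap.toSpanSingleton A _ y) with hg₀
    set g : G ⟶ Q := (e.toAdjunction.homEquiv _ _).symm g₀ with hg
    have hgeq : e.toAdjunction.homEquiv _ _ g = g₀ := Equiv.apply_symm_apply _ _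
    have hgne : g ≠ 0 := by
      intro h0
      rw [h0] at hgeq
      have hz0 : g₀ = 0 := by
        rw [← hgeq, Adjunction.homEquiv_apply]
        rw [Functor.map_zero, Limits.comp_zero]
      have hy1 : g₀ (1 : A) = y := by
        show (1 : A) • y = y
        exact one_smul A y
      have hy2 : g₀ (1 : A) = 0 := by rw [hz0]; rfl
      exact hy (by rw [← hy1, hy2])
    -- lift along the quotient map using projectivity
    haveI : Epi (show ModuleCat.of B B ⟶ Q from ModuleCat.ofHom N.mkQ) :=
      (ModuleCat.epi_iff_surjective _).2 (Submodule.mkQ_surjective N)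
    set h : G ⟶ ModuleCat.of B B :=
      Projective.factorThru g (show ModuleCat.of B B ⟶ Q from ModuleCat.ofHom N.mkQ) with hh
    have hfac : h ≫ (show ModuleCat.of B B ⟶ Q from ModuleCat.ofHom N.mkQ) = g :=
      Projective.factorThru_comp _ _
    have hle : LinearMap.range (show G →ₗ[B] B from h.hom) ≤ N :=
      le_iSup (fun f : G →ₗ[B] B => LinearMap.range f) _
    apply hgne
    refine ModuleCat.hom_ext (LinearMap.ext ?_)
    intro x
    have h1 : g x = N.mkQ (h x) := by
      conv_lhs => rw [← hfac]
      rfl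
    have h2 : (h x : B) ∈ N := hle ⟨x, rfl⟩
    rw [h1]
    show (Submodule.Quotient.mk (h x) : B ⧸ N) = 0
    exact (Submodule.Quotient.mk_eq_zero N).2 h2
  -- `1 ∈ N`, so finitely many maps suffice
  have h1 : (1 : B) ∈ N := hN ▸ Submodule.mem_top
  rw [hNdef, Submodule.mem_iSup_iff_exists_finsupp] at h1
  obtain ⟨μ, hμmem, hμsum⟩ := h1
  set s := μ.support with hs
  refine ⟨s.card, ?_⟩
  set en : Fin s.card ≃ ↥s := s.equivFin.symm with hen
  set Φ : (Fin s.card → G) →ₗ[B] B :=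
    ∑ i : Fin s.card, ((en i : G →ₗ[B] B)).comp (LinearMap.proj i) with hΦ
  have key : ∀ b : B, ∃ x, Φ x = b := by
    have mem : ∀ i : Fin s.card, ∃ a : G, (en i : G →ₗ[B] B) a = μ (en i) := by
      intro i
      exact hμmem (en i)
    choose a ha using mem
    have hΦa : Φ a = 1 := by
      rw [hΦ]
      rw [LinearMap.sum_apply]
      have : ∀ i : Fin s.card,
          (((en i : G →ₗ[B] B)).comp (LinearMap.proj i)) a = μ (en i) := fun i => ha i
      rw [Finset.sum_congr rfl fun i _ => this i]
      rw [← hμsum]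
      rw [Finsupp.sum]
      rw [← Finset.sum_coe_sort (s := s) (f := fun f => μ f)]
      exact Equiv.sum_comp en (fun x : ↥s => μ x)
    intro b
    refine ⟨b • a, ?_⟩
    rw [map_smul, hΦa, smul_eq_mul, mul_one]
  exact ⟨Φ, fun b => key b⟩

end Gen

/-- A ring `R` satisfies the (right) rank condition if for all positive integers
`n < m` there is no surjective homomorphism of right `R`-modules `R^n → R^m`.
Right `R`-modules are treated as left modules over the opposite ring `Rᵐᵒᵖ`. -/
def RightRankCondition (R : Type*) [Ring R] : Prop :=
  ∀ n m : ℕ, 0 < n → n < m →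
    ¬ ∃ f : (Fin n → Rᵐᵒᵖ) →ₗ[Rᵐᵒᵖ] (Fin m → Rᵐᵒᵖ), Function.Surjective f

/-- The rank condition is Morita invariant: if the categories of right modules over `R`
and over `S` are equivalent via an additive functor and `R` satisfies the rank condition,
then `S` satisfies the rank condition. -/
theorem statement9 {R : Type u} {S : Type v} [Ring R] [Ring S]
    (e : ModuleCat.{u} Rᵐᵒᵖ ≌ ModuleCat.{v} Sᵐᵒᵖ) (he : e.functor.Additive)
    (hR : RightRankCondition R) :
    RightRankCondition S := by
  haveI := he
  haveI hci : (e.functor ⋙ e.inverse).Additive := Functor.additive_of_iso e.unitIso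
  haveI hia : e.inverse.Additive := Functor.additive_of_full_essSurj_comp e.functor e.inverse
  haveI : e.inverse.PreservesEpimorphisms :=
    Functor.preservesEpimorphisms_of_adjunction e.symm.toAdjunction
  haveI : e.symm.functor.Additive := inferInstanceAs e.inverse.Additive
  haveI : e.symm.inverse.Additive := inferInstanceAs e.functor.Additive
  intro n m hn hnm hex
  have hex' : Srj Sᵐᵒᵖ (Fin n → Sᵐᵒᵖ) (Fin m → Sᵐᵒᵖ) := hex
  set P : ModuleCat.{u} Rᵐᵒᵖ := e.inverse.obj (ModuleCat.of Sᵐᵒᵖ Sᵐᵒᵖ) with hP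
  set G' : ModuleCat.{v} Sᵐᵒᵖ := e.functor.obj (ModuleCat.of Rᵐᵒᵖ Rᵐᵒᵖ) with hG'
  obtain ⟨b, hτ⟩ := gen_srj e.symm
  obtain ⟨c, hπ₀⟩ := gen_srj e
  -- transfer `hπ₀` to the `R`-side
  have hπ₁ : Srj Rᵐᵒᵖ (e.inverse.obj (ModuleCat.of Sᵐᵒᵖ (Fin c → G'))) P :=
    srj_map e.inverse (ModuleCat.of Sᵐᵒᵖ (Fin c → G')) (ModuleCat.of Sᵐᵒᵖ Sᵐᵒᵖ) hπ₀
  have e₂ : (e.inverse.obj G' : Type u) ≃ₗ[Rᵐᵒᵖ] Rᵐᵒᵖ :=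
    ((e.unitIso.app (ModuleCat.of Rᵐᵒᵖ Rᵐᵒᵖ)).symm).toLinearEquiv
  have hπ : Srj Rᵐᵒᵖ (Fin c → Rᵐᵒᵖ) P :=
    hπ₁.congr ((mapPiIso e.inverse G' c).toLinearEquiv.trans
      (LinearEquiv.piCongrRight fun _ => e₂)) (LinearEquiv.refl _ _)
  -- pad to positive exponents
  have hπ' : Srj Rᵐᵒᵖ (Fin (c + 1) → Rᵐᵒᵖ) P := (srj_proj _ (Nat.le_succ c)).trans hπ
  have hτ' : Srj Rᵐᵒᵖ (Fin (b + 1) → P) Rᵐᵒᵖ := (srj_proj _ (Nat.le_succ b)).trans hτ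
  set n₀ := n * (c + 1) with hn₀
  set M := n₀ + 1 with hM
  set N := M * (b + 1) with hN
  have s1 : Srj Rᵐᵒᵖ (Fin n₀ → Rᵐᵒᵖ) (Fin n → P) := srj_block hπ' n
  have hSit : Srj Sᵐᵒᵖ (Fin n → Sᵐᵒᵖ) (Fin N → Sᵐᵒᵖ) := srj_iterate _ hex' hn hnm N
  have s2 : Srj Rᵐᵒᵖ (Fin n → P) (Fin N → P) :=
    (srj_map e.inverse (ModuleCat.of Sᵐᵒᵖ (Fin n → Sᵐᵒᵖ))
        (ModuleCat.of Sᵐᵒᵖ (Fin N → Sᵐᵒᵖ)) hSit).congr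
      (mapPiIso e.inverse (ModuleCat.of Sᵐᵒᵖ Sᵐᵒᵖ) n).toLinearEquiv
      (mapPiIso e.inverse (ModuleCat.of Sᵐᵒᵖ Sᵐᵒᵖ) N).toLinearEquiv
  have s3 : Srj Rᵐᵒᵖ (Fin N → P) (Fin M → Rᵐᵒᵖ) := srj_block hτ' M
  exact hR n₀ M (Nat.mul_pos hn (Nat.succ_pos c)) (by omega) ((s1.trans s2).trans s3)
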